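/- (Asymptotics of the largest eigenvalue, rank-one case m=1) Let b_s = (1/2)(1 − (n−2)(n−4)/((4s+n)(4s+n−4))) and a'_s = sqrt((2s+1)(2s+2)(2s+n−2)(2s+n−1)/((4s+n−2)(4s+n)²(4s+n+2))), and let J'_k be the (k+1)×(k+1) symmetric tridiagonal matrix with diagonal entries b_0,...,b_k and off-diagonal entries a'_0,...,a'_{k-1}. If n/(2k) → ℓ > 0 as n, k → ∞, the largest eigenvalue of J'_k converges to 4(ℓ+1)/(ℓ+2)². -/

import Mathlib

open Filter

/-- Diagonal entry `b_s = (1/2)(1 − (n−2)(n−4)/((4s+n)(4s+n−4)))`. -/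
noncomputable def bcoef (n s : ℕ) : ℝ :=
  (1 / 2) * (1 - ((n : ℝ) - 2) * ((n : ℝ) - 4) /
    ((4 * (s : ℝ) + n) * (4 * (s : ℝ) + n - 4)))

/-- Off-diagonal entry
`a'_s = sqrt((2s+1)(2s+2)(2s+n−2)(2s+n−1)/((4s+n−2)(4s+n)²(4s+n+2)))`. -/
noncomputable def acoef (n s : ℕ) : ℝ :=
  Real.sqrt ((2 * (s : ℝ) + 1) * (2 * (s : ℝ) + 2) * (2 * (s : ℝ) + n - 2) *
      (2 * (s : ℝ) + n - 1) /
    ((4 * (s : ℝ) + n - 2) * (4 * (s : ℝ) + n) ^ 2 * (4 * (s : ℝ) + n + 2)))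

/-- The symmetric tridiagonal Jacobi matrix `J'_k` of size `(k+1) × (k+1)` with diagonal
entries `b_0, ..., b_k` and off-diagonal entries `a'_0, ..., a'_{k-1}`. -/
noncomputable def Jmat (n k : ℕ) : Matrix (Fin (k + 1)) (Fin (k + 1)) ℝ :=
  fun i j =>
    if (i : ℕ) = (j : ℕ) then bcoef n i
    else if (j : ℕ) = (i : ℕ) + 1 then acoef n i
    else if (i : ℕ) = (j : ℕ) + 1 then acoef n j
    else 0

/-- The largest eigenvalue of `J'_k`. -/
noncomputable def maxEig (n k : ℕ) : ℝ := sSup (spectrum ℝ (Jmat n k))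


set_option maxHeartbeats 1600000

open Matrix

lemma jmat_isHermitian (n k : ℕ) : (Jmat n k).IsHermitian := by
  rw [Matrix.IsHermitian, Matrix.conjTranspose_eq_transpose_of_trivial]
  ext i j
  simp only [Matrix.transpose_apply, Jmat]
  split_ifs with h1 h2 h3 h4 h5 h6 h7 h8
  all_goals first
    | rfl
    | omega
    | (congr 1 <;> omega)


lemma rayleigh_le {N : ℕ} (A : Matrix (Fin (N+1)) (Fin (N+1)) ℝ) (hA : A.IsHermitian)
    (x : Fin (N+1) → ℝ) :
    x ⬝ᵥ (A *ᵥ x) ≤ sSup (spectrum ℝ A) * (x ⬝ᵥ x) := by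
  have hspec : spectrum ℝ A = Set.range hA.eigenvalues :=
    Matrix.IsHermitian.spectrum_real_eq_range_eigenvalues hA
  have hbdd : BddAbove (spectrum ℝ A) := by
    rw [hspec]; exact (Set.finite_range _).bddAbove
  have hle : ∀ i, hA.eigenvalues i ≤ sSup (spectrum ℝ A) := fun i =>
    le_csSup hbdd (by rw [hspec]; exact Set.mem_range_self i)
  set μ := sSup (spectrum ℝ A) with hμ
  set U : Matrix (Fin (N+1)) (Fin (N+1)) ℝ := ((hA.eigenvectorUnitary : Matrix.unitaryGroup (Fin (N+1)) ℝ) : Matrix (Fin (N+1)) (Fin (N+1)) ℝ) with hUdef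
  have hU : star U * U = 1 := Unitary.star_mul_self_of_mem hA.eigenvectorUnitary.2
  have hU' : U * star U = 1 := Unitary.mul_star_self_of_mem hA.eigenvectorUnitary.2
  have hD : A = U * Matrix.diagonal (RCLike.ofReal ∘ hA.eigenvalues) * star U :=
    hA.spectral_theorem
  set y : Fin (N+1) → ℝ := star U *ᵥ x with hy
  have hyx : x ᵥ* U = y := by
    rw [hy, Matrix.star_eq_conjTranspose, Matrix.conjTranspose_eq_transpose_of_trivial,
      Matrix.mulVec_transpose]
  have e1 : A *ᵥ x = U *ᵥ (Matrix.diagonal (RCLike.ofReal ∘ hA.eigenvalues) *ᵥ y) := by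
    rw [hy]
    conv_lhs => rw [hD]
    rw [← Matrix.mulVec_mulVec, ← Matrix.mulVec_mulVec]
  have key : x ⬝ᵥ (A *ᵥ x) = ∑ i, hA.eigenvalues i * (y i)^2 := by
    rw [e1, Matrix.dotProduct_mulVec, hyx, dotProduct]
    refine Finset.sum_congr rfl fun i _ => ?_
    rw [Matrix.mulVec_diagonal]
    simp [RCLike.ofReal_real_eq_id]
    ring
  have knorm : y ⬝ᵥ y = x ⬝ᵥ x := by
    have : y ⬝ᵥ y = x ⬝ᵥ ((U * star U) *ᵥ x) := by
      rw [hy]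
      rw [Matrix.star_eq_conjTranspose, Matrix.conjTranspose_eq_transpose_of_trivial,
        Matrix.mulVec_transpose, ← Matrix.mulVec_mulVec, ← Matrix.dotProduct_mulVec,
        Matrix.mulVec_transpose]
    rw [this, hU', Matrix.one_mulVec]
  calc x ⬝ᵥ (A *ᵥ x) = ∑ i, hA.eigenvalues i * (y i)^2 := key
    _ ≤ ∑ i, μ * (y i)^2 := by
        refine Finset.sum_le_sum fun i _ => ?_
        exact mul_le_mul_of_nonneg_right (hle i) (sq_nonneg _)
    _ = μ * (y ⬝ᵥ y) := by rw [dotProduct, Finset.mul_sum]; exact Finset.sum_congr rfl fun i _ => by ring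
    _ = μ * (x ⬝ᵥ x) := by rw [knorm]

lemma bcoef_nonneg {n : ℕ} (hn : 5 ≤ n) (s : ℕ) : 0 ≤ bcoef n s := by
  have hn' : (5:ℝ) ≤ (n:ℝ) := by exact_mod_cast hn
  have hs : (0:ℝ) ≤ (s:ℝ) := Nat.cast_nonneg s
  unfold bcoef
  have h1 : (0:ℝ) < (4 * (s : ℝ) + n) * (4 * (s : ℝ) + n - 4) := by nlinarith
  have h2 : ((n:ℝ) - 2) * ((n:ℝ) - 4) ≤ (4 * (s : ℝ) + n) * (4 * (s : ℝ) + n - 4) := by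
    nlinarith
  have := div_le_one_of_le₀ h2 (le_of_lt h1)
  nlinarith [this]

lemma acoef_nonneg (n s : ℕ) : 0 ≤ acoef n s := Real.sqrt_nonneg _

lemma jmat_nonneg {n : ℕ} (hn : 5 ≤ n) (k : ℕ) (i j : Fin (k+1)) : 0 ≤ Jmat n k i j := by
  unfold Jmat
  split_ifs with h1 h2 h3
  · exact bcoef_nonneg hn _
  · exact acoef_nonneg _ _
  · exact acoef_nonneg _ _
  · exact le_refl _

lemma sum_ite_val_eq_le {k : ℕ} {A : ℝ} (hA : 0 ≤ A) (c : ℕ) :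
    (∑ j : Fin (k+1), if (j : ℕ) = c then A else 0) ≤ A := by
  by_cases hc : c ≤ k
  · set j₀ : Fin (k+1) := ⟨c, by omega⟩ with hj₀
    have hiff : ∀ j : Fin (k+1), ((j : ℕ) = c) ↔ (j = j₀) := fun j => by
      rw [Fin.ext_iff]
    simp only [hiff]
    rw [Finset.sum_ite_eq' Finset.univ j₀ (fun _ => A)]
    simp
  · have : ∀ j : Fin (k+1), ((j:ℕ) = c) = False := fun j => by
      simp only [eq_iff_iff, iff_false]; omega
    simp only [this, if_false, Finset.sum_const_zero]
    exact hA

lemma rowsum_le {n k : ℕ} {B A : ℝ} (hA : 0 ≤ A) (hB : 0 ≤ B)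
    (hb : ∀ s, s ≤ k → bcoef n s ≤ B) (ha : ∀ s, s + 1 ≤ k → acoef n s ≤ A)
    (i : Fin (k+1)) : (∑ j, Jmat n k i j) ≤ B + 2 * A := by
  have hpt : ∀ j : Fin (k+1), Jmat n k i j ≤
      (if (i:ℕ) = (j:ℕ) then B else 0) + ((if (j:ℕ) = (i:ℕ)+1 then A else 0)
        + (if (i:ℕ) = (j:ℕ)+1 then A else 0)) := by
    intro j
    unfold Jmat
    split_ifs with h1 h2 h3 <;> try omega
    · simpa using hb i.val (by omega)
    · simpa using ha i.val (by omega)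
    · simpa using ha j.val (by omega)
    · simp
  calc (∑ j, Jmat n k i j) ≤ ∑ j : Fin (k+1), ((if (i:ℕ) = (j:ℕ) then B else 0)
        + ((if (j:ℕ) = (i:ℕ)+1 then A else 0) + (if (i:ℕ) = (j:ℕ)+1 then A else 0))) :=
        Finset.sum_le_sum fun j _ => hpt j
    _ ≤ B + (A + A) := by
        rw [Finset.sum_add_distrib, Finset.sum_add_distrib]
        have e1 : (∑ j : Fin (k+1), if (i:ℕ) = (j:ℕ) then B else 0) = B := by
          have hiff : ∀ j : Fin (k+1), ((i:ℕ) = (j:ℕ)) ↔ (j = i) := fun j => by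
            rw [Fin.ext_iff]; exact eq_comm
          simp only [hiff]
          rw [Finset.sum_ite_eq' Finset.univ i (fun _ => B)]
          simp
        have e2 := sum_ite_val_eq_le (k := k) hA ((i:ℕ)+1)
        have e3 : (∑ j : Fin (k+1), if (i:ℕ) = (j:ℕ)+1 then A else 0) ≤ A := by
          by_cases hi : 0 < (i:ℕ)
          · have hiff : ∀ j : Fin (k+1), ((i:ℕ) = (j:ℕ)+1) ↔ ((j:ℕ) = (i:ℕ)-1) := fun j => by
              omega
            simp only [hiff]
            exact sum_ite_val_eq_le hA ((i:ℕ)-1)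
          · have : ∀ j : Fin (k+1), ((i:ℕ) = (j:ℕ)+1) = False := fun j => by
              simp only [eq_iff_iff, iff_false]; omega
            simp only [this, if_false, Finset.sum_const_zero]
            exact hA
        linarith
    _ = B + 2 * A := by ring


lemma maxEig_le_of_bounds {n k : ℕ} {B A : ℝ} (hA : 0 ≤ A) (hB : 0 ≤ B) (hn : 5 ≤ n)
    (hb : ∀ s, s ≤ k → bcoef n s ≤ B) (ha : ∀ s, s + 1 ≤ k → acoef n s ≤ A) :
    maxEig n k ≤ B + 2 * A := by
  have hH := jmat_isHermitian n k
  have hspec : spectrum ℝ (Jmat n k) = Set.range hH.eigenvalues :=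
    hH.spectrum_real_eq_range_eigenvalues
  unfold maxEig
  refine csSup_le (by rw [hspec]; exact Set.range_nonempty _) ?_
  intro lam hlam
  rw [hspec] at hlam
  obtain ⟨p, rfl⟩ := hlam
  set v : Fin (k+1) → ℝ := ⇑(hH.eigenvectorBasis p) with hvdef
  have hv : Jmat n k *ᵥ v = hH.eigenvalues p • v := hH.mulVec_eigenvectorBasis p
  have hvne : v ≠ 0 := by
    intro h0
    refine hH.eigenvectorBasis.orthonormal.ne_zero p ?_
    ext j
    exact congrFun h0 j
  obtain ⟨i₀, -, hmax⟩ := Finset.exists_max_image Finset.univ (fun i => |v i|)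
    ⟨0, Finset.mem_univ 0⟩
  have hpos : 0 < |v i₀| := by
    by_contra hle
    push_neg at hle
    apply hvne
    funext j
    have h1 : |v j| ≤ 0 := le_trans (hmax j (Finset.mem_univ j)) hle
    simpa using abs_nonpos_iff.mp h1
  have heig : hH.eigenvalues p * v i₀ = ∑ j, Jmat n k i₀ j * v j := by
    have := congrFun hv i₀
    simp only [Matrix.mulVec, dotProduct, Pi.smul_apply, smul_eq_mul] at this
    linarith
  have chain : hH.eigenvalues p * |v i₀| ≤ (B + 2 * A) * |v i₀| := by
    calc hH.eigenvalues p * |v i₀| ≤ |hH.eigenvalues p| * |v i₀| :=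
          mul_le_mul_of_nonneg_right (le_abs_self _) (abs_nonneg _)
      _ = |hH.eigenvalues p * v i₀| := (abs_mul _ _).symm
      _ = |∑ j, Jmat n k i₀ j * v j| := by rw [heig]
      _ ≤ ∑ j, |Jmat n k i₀ j * v j| := Finset.abs_sum_le_sum_abs _ _
      _ = ∑ j, Jmat n k i₀ j * |v j| := Finset.sum_congr rfl fun j _ => by
          rw [abs_mul, abs_of_nonneg (jmat_nonneg hn k i₀ j)]
      _ ≤ ∑ j, Jmat n k i₀ j * |v i₀| := Finset.sum_le_sum fun j _ =>
          mul_le_mul_of_nonneg_left (hmax j (Finset.mem_univ j)) (jmat_nonneg hn k i₀ j)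
      _ = (∑ j, Jmat n k i₀ j) * |v i₀| := (Finset.sum_mul _ _ _).symm
      _ ≤ (B + 2 * A) * |v i₀| :=
          mul_le_mul_of_nonneg_right (rowsum_le hA hB hb ha i₀) (abs_nonneg _)
  exact le_of_mul_le_mul_right chain hpos

lemma sum_ite_val_eq {k : ℕ} (A : ℝ) {c : ℕ} (hc : c ≤ k) :
    (∑ j : Fin (k+1), if (j : ℕ) = c then A else 0) = A := by
  set j₀ : Fin (k+1) := ⟨c, by omega⟩ with hj₀
  have hiff : ∀ j : Fin (k+1), ((j : ℕ) = c) ↔ (j = j₀) := fun j => by rw [Fin.ext_iff]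
  simp only [hiff]
  rw [Finset.sum_ite_eq' Finset.univ j₀ (fun _ => A)]
  simp

lemma sum_ite_interval {k a b : ℕ} (c : ℝ) (hab : a ≤ b) (hb : b ≤ k) :
    (∑ i : Fin (k+1), if a ≤ (i:ℕ) ∧ (i:ℕ) ≤ b then c else 0) = ((b + 1 - a : ℕ) : ℝ) * c := by
  have := Fin.sum_univ_eq_sum_range (fun i => if a ≤ i ∧ i ≤ b then c else 0) (k+1)
  rw [this]
  rw [← Finset.sum_filter]
  have hfil : (Finset.range (k+1)).filter (fun i => a ≤ i ∧ i ≤ b) = Finset.Icc a b := by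
    ext i
    simp only [Finset.mem_filter, Finset.mem_range, Finset.mem_Icc]
    omega
  rw [hfil]
  simp [Nat.card_Icc, mul_comm]


lemma maxEig_ge {n k : ℕ} {b' a' : ℝ} (hn : 5 ≤ n) (ha0 : 0 ≤ a') (hb0 : 0 ≤ b')
    {r : ℕ} (hr : 2 ≤ r) (hrk : r ≤ k)
    (hb : ∀ s, k - r ≤ s → s ≤ k → b' ≤ bcoef n s)
    (ha : ∀ s, k - r ≤ s → s + 1 ≤ k → a' ≤ acoef n s) :
    ((r:ℝ) - 1) * (b' + 2 * a') ≤ maxEig n k * ((r:ℝ) + 1) := by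
  set x : Fin (k+1) → ℝ := fun i => if k - r ≤ (i:ℕ) then 1 else 0 with hx
  have hx01 : ∀ i, 0 ≤ x i := fun i => by rw [hx]; dsimp only; split_ifs <;> norm_num
  have hxx : x ⬝ᵥ x = (r:ℝ) + 1 := by
    unfold dotProduct
    have h1 : ∀ i : Fin (k+1), x i * x i = if k - r ≤ (i:ℕ) ∧ (i:ℕ) ≤ k then 1 else 0 := by
      intro i
      rw [hx]; dsimp only
      have : (i:ℕ) ≤ k := by omega
      split_ifs <;> simp_all
    rw [Finset.sum_congr rfl fun i _ => h1 i, sum_ite_interval 1 (by omega) (le_refl k)]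
    have : k + 1 - (k - r) = r + 1 := by omega
    rw [this]
    push_cast
    ring
  have hJx_nonneg : ∀ i, 0 ≤ (Jmat n k *ᵥ x) i := by
    intro i
    show 0 ≤ ∑ j, Jmat n k i j * x j
    exact Finset.sum_nonneg fun j _ => mul_nonneg (jmat_nonneg hn k i j) (hx01 j)
  have hinner : ∀ i : Fin (k+1), k - r + 1 ≤ (i:ℕ) → (i:ℕ) + 1 ≤ k →
      b' + 2 * a' ≤ (Jmat n k *ᵥ x) i := by
    intro i hi1 hi2
    have hpt : ∀ j : Fin (k+1),
        (if (i:ℕ) = (j:ℕ) then b' else 0) + ((if (j:ℕ) = (i:ℕ)+1 then a' else 0)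
          + (if (i:ℕ) = (j:ℕ)+1 then a' else 0)) ≤ Jmat n k i j * x j := by
      intro j
      unfold Jmat
      rw [hx]
      dsimp only
      by_cases h1 : (i:ℕ) = (j:ℕ)
      · rw [if_pos h1, if_pos h1, if_neg (by omega), if_neg (by omega), if_pos (by omega),
          mul_one]
        have := hb j (by omega) (by omega)
        have : bcoef n i = bcoef n j := by rw [show (i:ℕ) = (j:ℕ) from h1]
        linarith [hb j (show k - r ≤ (j:ℕ) by omega) (show (j:ℕ) ≤ k by omega)]
      · rw [if_neg h1, if_neg h1]
        by_cases h2 : (j:ℕ) = (i:ℕ)+1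
        · rw [if_pos h2, if_pos h2, if_neg (by omega), if_pos (by omega), mul_one]
          have := ha i (by omega) (by omega)
          linarith
        · rw [if_neg h2, if_neg h2]
          by_cases h3 : (i:ℕ) = (j:ℕ)+1
          · rw [if_pos h3, if_pos h3, if_pos (by omega), mul_one]
            have := ha j (by omega) (by omega)
            linarith
          · rw [if_neg h3, if_neg h3]
            simp
    have hsum : (∑ j : Fin (k+1), ((if (i:ℕ) = (j:ℕ) then b' else 0)
        + ((if (j:ℕ) = (i:ℕ)+1 then a' else 0) + (if (i:ℕ) = (j:ℕ)+1 then a' else 0))))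
        = b' + (a' + a') := by
      rw [Finset.sum_add_distrib, Finset.sum_add_distrib]
      have e1 : (∑ j : Fin (k+1), if (i:ℕ) = (j:ℕ) then b' else 0) = b' := by
        have hiff : ∀ j : Fin (k+1), ((i:ℕ) = (j:ℕ)) ↔ ((j:ℕ) = (i:ℕ)) := fun j => eq_comm
        simp only [hiff]
        exact sum_ite_val_eq b' (by omega)
      have e2 : (∑ j : Fin (k+1), if (j:ℕ) = (i:ℕ)+1 then a' else 0) = a' :=
        sum_ite_val_eq a' (by omega)
      have e3 : (∑ j : Fin (k+1), if (i:ℕ) = (j:ℕ)+1 then a' else 0) = a' := by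
        have hiff : ∀ j : Fin (k+1), ((i:ℕ) = (j:ℕ)+1) ↔ ((j:ℕ) = (i:ℕ)-1) := fun j => by
          constructor <;> omega
        simp only [hiff]
        exact sum_ite_val_eq a' (by omega)
      rw [e1, e2, e3]
    calc b' + 2 * a' = b' + (a' + a') := by ring
      _ = ∑ j : Fin (k+1), ((if (i:ℕ) = (j:ℕ) then b' else 0)
          + ((if (j:ℕ) = (i:ℕ)+1 then a' else 0) + (if (i:ℕ) = (j:ℕ)+1 then a' else 0))) :=
          hsum.symm
      _ ≤ ∑ j, Jmat n k i j * x j := Finset.sum_le_sum fun j _ => hpt j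
      _ = (Jmat n k *ᵥ x) i := rfl
  have houter : ((r:ℝ) - 1) * (b' + 2 * a') ≤ x ⬝ᵥ (Jmat n k *ᵥ x) := by
    have hpt : ∀ i : Fin (k+1),
        (if k - r + 1 ≤ (i:ℕ) ∧ (i:ℕ) ≤ k - 1 then b' + 2 * a' else 0)
          ≤ x i * (Jmat n k *ᵥ x) i := by
      intro i
      split_ifs with h
      · have hx1 : x i = 1 := by rw [hx]; exact if_pos (by omega)
        rw [hx1, one_mul]
        exact hinner i (by omega) (by omega)
      · exact mul_nonneg (hx01 i) (hJx_nonneg i)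
    calc ((r:ℝ) - 1) * (b' + 2 * a')
        = (((k - 1) + 1 - (k - r + 1) : ℕ) : ℝ) * (b' + 2 * a') := by
          congr 1
          have : k - 1 + 1 - (k - r + 1) = r - 1 := by omega
          rw [this]
          have : ((r - 1 : ℕ) : ℝ) = (r:ℝ) - 1 := by
            have : (1:ℕ) ≤ r := by omega
            push_cast [Nat.cast_sub this]
            ring
          rw [this]
      _ = ∑ i : Fin (k+1), (if k - r + 1 ≤ (i:ℕ) ∧ (i:ℕ) ≤ k - 1 then b' + 2 * a' else 0) :=
          (sum_ite_interval _ (by omega) (by omega)).symm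
      _ ≤ ∑ i, x i * (Jmat n k *ᵥ x) i := Finset.sum_le_sum fun i _ => hpt i
      _ = x ⬝ᵥ (Jmat n k *ᵥ x) := rfl
  have hray := rayleigh_le (Jmat n k) (jmat_isHermitian n k) x
  rw [hxx] at hray
  calc ((r:ℝ) - 1) * (b' + 2 * a') ≤ x ⬝ᵥ (Jmat n k *ᵥ x) := houter
    _ ≤ maxEig n k * ((r:ℝ) + 1) := hray

lemma bcoef_mono {n s t : ℕ} (hn : 5 ≤ n) (hst : s ≤ t) : bcoef n s ≤ bcoef n t := by
  have hN : (5:ℝ) ≤ (n:ℝ) := by exact_mod_cast hn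
  have hS : (0:ℝ) ≤ (s:ℝ) := Nat.cast_nonneg s
  have hST : (s:ℝ) ≤ (t:ℝ) := by exact_mod_cast hst
  unfold bcoef
  have h1 : (0:ℝ) < (4*(s:ℝ)+n) * (4*(s:ℝ)+n-4) := by nlinarith
  have h2 : (4*(s:ℝ)+n) * (4*(s:ℝ)+n-4) ≤ (4*(t:ℝ)+n) * (4*(t:ℝ)+n-4) := by nlinarith
  have h3 : (0:ℝ) ≤ ((n:ℝ)-2) * ((n:ℝ)-4) := by nlinarith
  have := div_le_div_of_nonneg_left h3 h1 h2
  linarith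

lemma acoef_le {n k s : ℕ} (hn : 5 ≤ n) (hs : s ≤ k) :
    acoef n s ≤ Real.sqrt ((1/16) * (1 - (((n:ℝ)-2)^2 - 4)/((4*(k:ℝ)+n)^2 - 4)) *
      (1 - ((n:ℝ)-4)^2/(4*(k:ℝ)+n)^2)) := by
  have hN : (5:ℝ) ≤ (n:ℝ) := by exact_mod_cast hn
  have hS : (0:ℝ) ≤ (s:ℝ) := Nat.cast_nonneg s
  have hSK : (s:ℝ) ≤ (k:ℝ) := by exact_mod_cast hs
  set N := (n:ℝ) with hNdef
  set S := (s:ℝ) with hSdef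
  set K := (k:ℝ) with hKdef
  have hD5 : (5:ℝ) ≤ 4*S+N := by linarith
  have hDE : 4*S+N ≤ 4*K+N := by linarith
  have hD2 : (0:ℝ) < (4*S+N)^2 - 4 := by nlinarith
  have hE2 : (0:ℝ) < (4*K+N)^2 - 4 := by nlinarith
  apply Real.sqrt_le_sqrt
  have harg : (2*S+1)*(2*S+2)*(2*S+N-2)*(2*S+N-1) / ((4*S+N-2)*(4*S+N)^2*(4*S+N+2))
      = (1/16) * (((4*S+N)^2-(N-2)^2)/((4*S+N)^2-4)) * (((4*S+N)^2-(N-4)^2)/(4*S+N)^2) := by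
    have d1 : (4*S+N-2) ≠ 0 := by linarith
    have d2 : (4*S+N) ≠ 0 := by linarith
    have d3 : (4*S+N+2) ≠ 0 := by linarith
    have d4 : ((4*S+N)^2-4) ≠ 0 := ne_of_gt hD2
    rw [show (4*S+N)^2-4 = (4*S+N-2)*(4*S+N+2) by ring]; field_simp
    ring
  rw [harg]
  have f1 : ((4*S+N)^2-(N-2)^2)/((4*S+N)^2-4) ≤ 1 - ((N-2)^2-4)/((4*K+N)^2-4) := by
    have e : ((4*S+N)^2-(N-2)^2)/((4*S+N)^2-4) = 1 - ((N-2)^2-4)/((4*S+N)^2-4) := by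
      field_simp; ring
    rw [e]
    have : ((N-2)^2-4)/((4*K+N)^2-4) ≤ ((N-2)^2-4)/((4*S+N)^2-4) :=
      div_le_div_of_nonneg_left (by nlinarith) hD2 (by nlinarith)
    linarith
  have f2 : ((4*S+N)^2-(N-4)^2)/(4*S+N)^2 ≤ 1 - (N-4)^2/(4*K+N)^2 := by
    have e : ((4*S+N)^2-(N-4)^2)/(4*S+N)^2 = 1 - (N-4)^2/(4*S+N)^2 := by
      field_simp
    rw [e]
    have : (N-4)^2/(4*K+N)^2 ≤ (N-4)^2/(4*S+N)^2 :=
      div_le_div_of_nonneg_left (by nlinarith) (by nlinarith) (by nlinarith)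
    linarith
  have g1 : (0:ℝ) ≤ ((4*S+N)^2-(N-2)^2)/((4*S+N)^2-4) :=
    div_nonneg (by nlinarith) (le_of_lt hD2)
  have g2 : (0:ℝ) ≤ ((4*S+N)^2-(N-4)^2)/(4*S+N)^2 :=
    div_nonneg (by nlinarith) (by positivity)
  have hf1nn : (0:ℝ) ≤ 1 - ((N-2)^2-4)/((4*K+N)^2-4) := le_trans g1 f1
  calc (1/16) * (((4*S+N)^2-(N-2)^2)/((4*S+N)^2-4)) * (((4*S+N)^2-(N-4)^2)/(4*S+N)^2)
      ≤ (1/16) * (1 - ((N-2)^2-4)/((4*K+N)^2-4)) * (1 - (N-4)^2/(4*K+N)^2) := by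
        apply mul_le_mul
        · exact mul_le_mul (le_refl _) f1 g1 (by norm_num)
        · exact f2
        · exact g2
        · positivity
      _ = _ := rfl

lemma acoef_ge_nonneg {n s₀ : ℕ} (hn : 5 ≤ n) :
    (0:ℝ) ≤ (1/4) * (1 - ((n:ℝ)-2)^2/(4*(s₀:ℝ)+n)^2) := by
  have hN : (5:ℝ) ≤ (n:ℝ) := by exact_mod_cast hn
  have hS0 : (0:ℝ) ≤ (s₀:ℝ) := Nat.cast_nonneg s₀
  have h : ((n:ℝ)-2)^2/(4*(s₀:ℝ)+n)^2 ≤ 1 := by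
    rw [div_le_one (by positivity)]
    nlinarith
  linarith

lemma acoef_ge {n s₀ s : ℕ} (hn : 5 ≤ n) (h : s₀ ≤ s) :
    (1/4) * (1 - ((n:ℝ)-2)^2/(4*(s₀:ℝ)+n)^2) ≤ acoef n s := by
  have hN : (5:ℝ) ≤ (n:ℝ) := by exact_mod_cast hn
  have hS0 : (0:ℝ) ≤ (s₀:ℝ) := Nat.cast_nonneg s₀
  have hTS : (s₀:ℝ) ≤ (s:ℝ) := by exact_mod_cast h
  set N := (n:ℝ)
  set S := (s:ℝ)
  set T := (s₀:ℝ)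
  apply Real.le_sqrt_of_sq_le
  have hT5 : (5:ℝ) ≤ 4*T+N := by linarith
  have hD5 : (5:ℝ) ≤ 4*S+N := by linarith
  have hD2 : (0:ℝ) < (4*S+N)^2 - 4 := by nlinarith
  have hL0 : (0:ℝ) ≤ (1/4) * (1 - (N-2)^2/(4*T+N)^2) := acoef_ge_nonneg hn
  have hratio : (N-2)^2/(4*S+N)^2 ≤ (N-2)^2/(4*T+N)^2 :=
    div_le_div_of_nonneg_left (by nlinarith) (by positivity) (by nlinarith)
  have hstep : (1/4) * (1 - (N-2)^2/(4*T+N)^2) ≤ (1/4) * (1 - (N-2)^2/(4*S+N)^2) := by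
    linarith
  have harg : (2*S+1)*(2*S+2)*(2*S+N-2)*(2*S+N-1) / ((4*S+N-2)*(4*S+N)^2*(4*S+N+2))
      = (1/16) * (((4*S+N)^2-(N-2)^2)/((4*S+N)^2-4)) * (((4*S+N)^2-(N-4)^2)/(4*S+N)^2) := by
    have d1 : (4*S+N-2) ≠ 0 := by linarith
    have d2 : (4*S+N) ≠ 0 := by linarith
    have d3 : (4*S+N+2) ≠ 0 := by linarith
    have d4 : ((4*S+N)^2-4) ≠ 0 := ne_of_gt hD2
    field_simp
    ring
  rw [harg]
  have e1 : 1 - (N-2)^2/(4*S+N)^2 = ((4*S+N)^2-(N-2)^2)/(4*S+N)^2 := by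
    field_simp
  have g0 : (0:ℝ) ≤ ((4*S+N)^2-(N-2)^2)/(4*S+N)^2 :=
    div_nonneg (by nlinarith) (by positivity)
  have i1 : ((4*S+N)^2-(N-2)^2)/(4*S+N)^2 ≤ ((4*S+N)^2-(N-2)^2)/((4*S+N)^2-4) :=
    div_le_div_of_nonneg_left (by nlinarith) hD2 (by nlinarith)
  have i2 : ((4*S+N)^2-(N-2)^2)/(4*S+N)^2 ≤ ((4*S+N)^2-(N-4)^2)/(4*S+N)^2 := by
    apply div_le_div_of_nonneg_right ?_ (by positivity)
    nlinarith
  calc ((1/4) * (1 - (N-2)^2/(4*T+N)^2))^2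
      ≤ ((1/4) * (1 - (N-2)^2/(4*S+N)^2))^2 := by
        exact pow_le_pow_left₀ hL0 hstep 2
      _ = (1/16) * (((4*S+N)^2-(N-2)^2)/(4*S+N)^2) * (((4*S+N)^2-(N-2)^2)/(4*S+N)^2) := by
        rw [e1]; ring
      _ ≤ (1/16) * (((4*S+N)^2-(N-2)^2)/((4*S+N)^2-4)) * (((4*S+N)^2-(N-4)^2)/(4*S+N)^2) := by
        apply mul_le_mul
        · exact mul_le_mul (le_refl _) i1 g0 (by norm_num)
        · exact i2
        · exact g0
        · exact mul_nonneg (by norm_num) (le_trans g0 i1)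

private lemma frac_cancel {A B e : ℝ} (he : e ≠ 0) : (A/e)/(B/e) = A/B := by
  rw [div_div_div_comm, div_self he, div_one]



/-- if `n/(2k) → ℓ > 0` as `n, k → ∞`, the largest eigenvalue of the Jacobi
matrix `J'_k` converges to `4(ℓ+1)/(ℓ+2)²`. -/
theorem stmt19 (ℓ : ℝ) (hℓ : 0 < ℓ) (n k : ℕ → ℕ)
    (hn : Tendsto n atTop atTop) (hk : Tendsto k atTop atTop)
    (hratio : Tendsto (fun j => (n j : ℝ) / (2 * (k j : ℝ))) atTop (nhds ℓ)) :
    Tendsto (fun j => maxEig (n j) (k j)) atTop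
      (nhds (4 * (ℓ + 1) / (ℓ + 2) ^ 2)) := by
  have h2ℓ : (0:ℝ) < 2 + ℓ := by linarith
  set m : ℝ := ℓ^2/(2+ℓ)^2 with hmdef
  have hm1 : m < 1 := by
    rw [hmdef, div_lt_one (by positivity)]
    nlinarith
  have hm0 : 0 ≤ m := by positivity
  -- sequences
  set r : ℕ → ℕ := fun j => Nat.sqrt (k j) with hrdef
  set u : ℕ → ℝ := fun j => (n j : ℝ) / (2 * (k j : ℝ)) with hudef
  set w : ℕ → ℝ := fun j => 1 / (k j : ℝ) with hwdef
  set ρ : ℕ → ℝ := fun j => (r j : ℝ) / (k j : ℝ) with hρdef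
  have hKtop : Tendsto (fun j => (k j : ℝ)) atTop atTop := tendsto_natCast_atTop_atTop.comp hk
  have hrtop : Tendsto r atTop atTop := by
    rw [tendsto_atTop_atTop]
    intro b
    obtain ⟨i, hi⟩ := (tendsto_atTop_atTop.mp hk) (b * b)
    exact ⟨i, fun a ha => Nat.le_sqrt.mpr (hi a ha)⟩
  have hRtop : Tendsto (fun j => (r j : ℝ)) atTop atTop :=
    tendsto_natCast_atTop_atTop.comp hrtop
  have hu : Tendsto u atTop (nhds ℓ) := hratio
  have hw : Tendsto w atTop (nhds 0) := by
    have := hKtop.inv_tendsto_atTop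
    apply this.congr
    intro j
    simp [Pi.inv_apply, hwdef, one_div]
  have hev_n5 : ∀ᶠ j in atTop, 5 ≤ n j := hn.eventually_ge_atTop 5
  have hev_k9 : ∀ᶠ j in atTop, 9 ≤ k j := hk.eventually_ge_atTop 9
  have hev_r3 : ∀ᶠ j in atTop, 3 ≤ r j := by
    filter_upwards [hev_k9] with j hj
    calc 3 = Nat.sqrt 9 := by norm_num
      _ ≤ r j := Nat.sqrt_le_sqrt hj
  have hev : ∀ᶠ j in atTop, 5 ≤ n j ∧ 9 ≤ k j ∧ 3 ≤ r j := by
    filter_upwards [hev_n5, hev_k9, hev_r3] with j h1 h2 h3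
    exact ⟨h1, h2, h3⟩
  have hρ0 : Tendsto ρ atTop (nhds 0) := by
    have hRinv : Tendsto (fun j => 1 / (r j : ℝ)) atTop (nhds 0) := by
      have := hRtop.inv_tendsto_atTop
      apply this.congr
      intro j
      simp [Pi.inv_apply, one_div]
    apply tendsto_of_tendsto_of_tendsto_of_le_of_le' tendsto_const_nhds hRinv
    · filter_upwards [hev] with j ⟨h5, h9, h3⟩
      have h1 : (0:ℝ) ≤ (r j : ℝ) := Nat.cast_nonneg _
      have h2 : (0:ℝ) < (k j : ℝ) := by exact_mod_cast (by omega : 0 < k j)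
      rw [hρdef]
      positivity
    · filter_upwards [hev] with j ⟨h5, h9, h3⟩
      have hRK : ((r j : ℝ)) * (r j : ℝ) ≤ (k j : ℝ) := by
        exact_mod_cast Nat.sqrt_le (k j)
      have hR1 : (1:ℝ) ≤ (r j : ℝ) := by exact_mod_cast (by omega : 1 ≤ r j)
      have hK0 : (0:ℝ) < (k j : ℝ) := by exact_mod_cast (by omega : 0 < k j)
      rw [hρdef, div_le_div_iff₀ hK0 (by linarith)]
      nlinarith
  -- pointwise nonzero facts helper
  have hKne : ∀ j : ℕ, 9 ≤ k j → ((k j : ℝ)) ≠ 0 := fun j hj =>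
    Nat.cast_ne_zero.mpr (by omega)
  have hS₀cast : ∀ j : ℕ, ((k j - r j : ℕ) : ℝ) = (k j : ℝ) - (r j : ℝ) := fun j =>
    Nat.cast_sub (Nat.sqrt_le_self (k j))
  have hlim2u : Tendsto (fun j => 2 + u j) atTop (nhds (2 + ℓ)) :=
    tendsto_const_nhds.add hu
  have hlim2uρ : Tendsto (fun j => 2 + u j - 2 * ρ j) atTop (nhds (2 + ℓ - 2*0)) :=
    hlim2u.sub (hρ0.const_mul 2)
  have h2ℓ0 : (2:ℝ) + ℓ - 2*0 ≠ 0 := by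
    intro h; nlinarith
  -- x1 : for bcoef at k
  have hx1 : Tendsto (fun j => ((n j:ℝ) - 2) * ((n j:ℝ) - 4) /
      ((4*(k j:ℝ) + (n j:ℝ)) * (4*(k j:ℝ) + (n j:ℝ) - 4))) atTop (nhds m) := by
    have hnum : Tendsto (fun j => (u j - w j) * (u j - 2*w j)) atTop
        (nhds ((ℓ - 0) * (ℓ - 2*0))) := (hu.sub hw).mul (hu.sub (hw.const_mul 2))
    have hden : Tendsto (fun j => (2 + u j) * (2 + u j - 2*w j)) atTop
        (nhds ((2+ℓ) * (2+ℓ - 2*0))) := hlim2u.mul (hlim2u.sub (hw.const_mul 2))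
    have hfrac := hnum.div hden (ne_of_gt (by nlinarith))
    have hlim : Tendsto (fun j => (u j - w j) * (u j - 2*w j) /
        ((2 + u j) * (2 + u j - 2*w j))) atTop (nhds m) := by
      convert hfrac using 2
      · rfl
      rw [hmdef]; ring
    apply hlim.congr'
    filter_upwards [hev] with j ⟨h5, h9, h3⟩
    have hK0 : ((k j:ℝ)) ≠ 0 := hKne j h9
    have e1 : u j - w j = ((n j:ℝ) - 2)/(2*(k j:ℝ)) := by
      simp only [hudef, hwdef]; field_simp
    have e2 : u j - 2*w j = ((n j:ℝ) - 4)/(2*(k j:ℝ)) := by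
      simp only [hudef, hwdef]; field_simp; ring
    have e3 : 2 + u j = (4*(k j:ℝ) + (n j:ℝ))/(2*(k j:ℝ)) := by
      simp only [hudef]; field_simp; ring
    have e4 : 2 + u j - 2*w j = (4*(k j:ℝ) + (n j:ℝ) - 4)/(2*(k j:ℝ)) := by
      simp only [hudef, hwdef]; field_simp; ring
    rw [e1, e2, e4, e3, div_mul_div_comm, div_mul_div_comm,
      frac_cancel (mul_ne_zero (mul_ne_zero two_ne_zero hK0) (mul_ne_zero two_ne_zero hK0))]
  -- x2
  have hx2 : Tendsto (fun j => (((n j:ℝ)-2)^2 - 4)/((4*(k j:ℝ)+(n j:ℝ))^2 - 4))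
      atTop (nhds m) := by
    have hnum : Tendsto (fun j => (u j - w j)^2 - (w j)^2) atTop
        (nhds ((ℓ - 0)^2 - 0^2)) := ((hu.sub hw).pow 2).sub (hw.pow 2)
    have hden : Tendsto (fun j => (2 + u j)^2 - (w j)^2) atTop
        (nhds ((2+ℓ)^2 - 0^2)) := (hlim2u.pow 2).sub (hw.pow 2)
    have hfrac := hnum.div hden (ne_of_gt (by nlinarith))
    have hlim : Tendsto (fun j => ((u j - w j)^2 - (w j)^2) / ((2 + u j)^2 - (w j)^2))
        atTop (nhds m) := by
      convert hfrac using 2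
      · rfl
      rw [hmdef]; ring
    apply hlim.congr'
    filter_upwards [hev] with j ⟨h5, h9, h3⟩
    have hK0 : ((k j:ℝ)) ≠ 0 := hKne j h9
    have e1 : (u j - w j)^2 - (w j)^2 = (((n j:ℝ)-2)^2 - 4)/(2*(k j:ℝ))^2 := by
      simp only [hudef, hwdef]; field_simp; ring
    have e2 : (2 + u j)^2 - (w j)^2 = ((4*(k j:ℝ)+(n j:ℝ))^2 - 4)/(2*(k j:ℝ))^2 := by
      simp only [hudef, hwdef]; field_simp; ring
    rw [e1, e2, frac_cancel (pow_ne_zero 2 (mul_ne_zero two_ne_zero hK0))]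
  -- x3
  have hx3 : Tendsto (fun j => ((n j:ℝ)-4)^2/(4*(k j:ℝ)+(n j:ℝ))^2) atTop (nhds m) := by
    have hnum : Tendsto (fun j => (u j - 2*w j)^2) atTop (nhds ((ℓ - 2*0)^2)) :=
      (hu.sub (hw.const_mul 2)).pow 2
    have hden : Tendsto (fun j => (2 + u j)^2) atTop (nhds ((2+ℓ)^2)) := hlim2u.pow 2
    have hfrac := hnum.div hden (ne_of_gt (by nlinarith))
    have hlim : Tendsto (fun j => (u j - 2*w j)^2 / (2 + u j)^2) atTop (nhds m) := by
      convert hfrac using 2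
      · rfl
      rw [hmdef]; ring
    apply hlim.congr'
    filter_upwards [hev] with j ⟨h5, h9, h3⟩
    have hK0 : ((k j:ℝ)) ≠ 0 := hKne j h9
    have e1 : (u j - 2*w j)^2 = ((n j:ℝ)-4)^2/(2*(k j:ℝ))^2 := by
      simp only [hudef, hwdef]; field_simp; ring
    have e2 : (2 + u j)^2 = (4*(k j:ℝ)+(n j:ℝ))^2/(2*(k j:ℝ))^2 := by
      simp only [hudef]; field_simp; ring
    rw [e1, e2, frac_cancel (pow_ne_zero 2 (mul_ne_zero two_ne_zero hK0))]
  -- x4 : bcoef at k - r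
  have hx4 : Tendsto (fun j => ((n j:ℝ) - 2) * ((n j:ℝ) - 4) /
      ((4*((k j - r j : ℕ):ℝ) + (n j:ℝ)) * (4*((k j - r j : ℕ):ℝ) + (n j:ℝ) - 4)))
      atTop (nhds m) := by
    have hnum : Tendsto (fun j => (u j - w j) * (u j - 2*w j)) atTop
        (nhds ((ℓ - 0) * (ℓ - 2*0))) := (hu.sub hw).mul (hu.sub (hw.const_mul 2))
    have hden : Tendsto (fun j => (2 + u j - 2*ρ j) * (2 + u j - 2*ρ j - 2*w j)) atTop
        (nhds ((2+ℓ-2*0) * (2+ℓ-2*0 - 2*0))) := hlim2uρ.mul (hlim2uρ.sub (hw.const_mul 2))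
    have hfrac := hnum.div hden (ne_of_gt (by nlinarith))
    have hlim : Tendsto (fun j => (u j - w j) * (u j - 2*w j) /
        ((2 + u j - 2*ρ j) * (2 + u j - 2*ρ j - 2*w j))) atTop (nhds m) := by
      convert hfrac using 2
      · rfl
      rw [hmdef]; ring
    apply hlim.congr'
    filter_upwards [hev] with j ⟨h5, h9, h3⟩
    have hK0 : ((k j:ℝ)) ≠ 0 := hKne j h9
    have e1 : u j - w j = ((n j:ℝ) - 2)/(2*(k j:ℝ)) := by
      simp only [hudef, hwdef]; field_simp
    have e2 : u j - 2*w j = ((n j:ℝ) - 4)/(2*(k j:ℝ)) := by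
      simp only [hudef, hwdef]; field_simp; ring
    have e6 : 2 + u j - 2*ρ j = (4*((k j:ℝ) - (r j:ℝ)) + (n j:ℝ))/(2*(k j:ℝ)) := by
      simp only [hudef, hρdef]; field_simp; ring
    have e7 : 2 + u j - 2*ρ j - 2*w j
        = (4*((k j:ℝ) - (r j:ℝ)) + (n j:ℝ) - 4)/(2*(k j:ℝ)) := by
      simp only [hudef, hρdef, hwdef]; field_simp; ring
    rw [e1, e2, e7, e6, div_mul_div_comm, div_mul_div_comm,
      frac_cancel (mul_ne_zero (mul_ne_zero two_ne_zero hK0) (mul_ne_zero two_ne_zero hK0)),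
      hS₀cast j]
  -- x5 : a' at k - r
  have hx5 : Tendsto (fun j => ((n j:ℝ)-2)^2/(4*((k j - r j : ℕ):ℝ)+(n j:ℝ))^2)
      atTop (nhds m) := by
    have hnum : Tendsto (fun j => (u j - w j)^2) atTop (nhds ((ℓ - 0)^2)) :=
      (hu.sub hw).pow 2
    have hden : Tendsto (fun j => (2 + u j - 2*ρ j)^2) atTop (nhds ((2+ℓ-2*0)^2)) :=
      hlim2uρ.pow 2
    have hfrac := hnum.div hden (ne_of_gt (by nlinarith))
    have hlim : Tendsto (fun j => (u j - w j)^2 / (2 + u j - 2*ρ j)^2) atTop (nhds m) := by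
      convert hfrac using 2
      · rfl
      rw [hmdef]; ring
    apply hlim.congr'
    filter_upwards [hev] with j ⟨h5, h9, h3⟩
    have hK0 : ((k j:ℝ)) ≠ 0 := hKne j h9
    have e1 : (u j - w j)^2 = ((n j:ℝ)-2)^2/(2*(k j:ℝ))^2 := by
      simp only [hudef, hwdef]; field_simp
    have e6 : (2 + u j - 2*ρ j)^2 = (4*((k j:ℝ) - (r j:ℝ)) + (n j:ℝ))^2/(2*(k j:ℝ))^2 := by
      simp only [hudef, hρdef]; field_simp; ring
    rw [e1, e6, frac_cancel (pow_ne_zero 2 (mul_ne_zero two_ne_zero hK0)), hS₀cast j]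
  -- x6 : (R-1)/(R+1) → 1
  have hx6 : Tendsto (fun j => ((r j:ℝ) - 1)/((r j:ℝ) + 1)) atTop (nhds 1) := by
    have hR1top : Tendsto (fun j => (r j:ℝ) + 1) atTop atTop :=
      tendsto_atTop_add_const_right atTop 1 hRtop
    have hinv : Tendsto (fun j => 2/((r j:ℝ) + 1)) atTop (nhds 0) := by
      have := hR1top.inv_tendsto_atTop.const_mul (2:ℝ)
      rw [mul_zero] at this
      apply this.congr
      intro j
      simp [Pi.inv_apply, div_eq_mul_inv, mul_comm]
    have hlim : Tendsto (fun j => 1 - 2/((r j:ℝ) + 1)) atTop (nhds (1 - 0)) :=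
      tendsto_const_nhds.sub hinv
    rw [sub_zero] at hlim
    apply hlim.congr'
    filter_upwards [hev] with j ⟨h5, h9, h3⟩
    have hR0 : ((r j:ℝ) + 1) ≠ 0 := by positivity
    field_simp
    ring
  -- composite limits
  have hbk : Tendsto (fun j => bcoef (n j) (k j)) atTop (nhds ((1/2) * (1 - m))) := by
    have h : Tendsto (fun j => (1/2 : ℝ) * (1 - ((n j:ℝ) - 2) * ((n j:ℝ) - 4) /
        ((4*(k j:ℝ) + (n j:ℝ)) * (4*(k j:ℝ) + (n j:ℝ) - 4)))) atTop
        (nhds ((1/2) * (1 - m))) := (tendsto_const_nhds.sub hx1).const_mul _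
    exact h.congr fun j => rfl
  have hUB : Tendsto (fun j => Real.sqrt ((1/16) *
      (1 - (((n j:ℝ)-2)^2 - 4)/((4*(k j:ℝ)+(n j:ℝ))^2 - 4)) *
      (1 - ((n j:ℝ)-4)^2/(4*(k j:ℝ)+(n j:ℝ))^2))) atTop (nhds ((1 - m)/4)) := by
    have harg : Tendsto (fun j => (1/16 : ℝ) *
        (1 - (((n j:ℝ)-2)^2 - 4)/((4*(k j:ℝ)+(n j:ℝ))^2 - 4)) *
        (1 - ((n j:ℝ)-4)^2/(4*(k j:ℝ)+(n j:ℝ))^2)) atTop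
        (nhds ((1/16) * (1 - m) * (1 - m))) :=
      (tendsto_const_nhds.mul (tendsto_const_nhds.sub hx2)).mul
        (tendsto_const_nhds.sub hx3)
    have := harg.sqrt
    have hval : Real.sqrt ((1/16) * (1 - m) * (1 - m)) = (1 - m)/4 := by
      rw [show (1/16 : ℝ) * (1 - m) * (1 - m) = ((1 - m)/4)^2 by ring]
      exact Real.sqrt_sq (by linarith)
    rwa [hval] at this
  have hbk' : Tendsto (fun j => bcoef (n j) (k j - r j)) atTop (nhds ((1/2) * (1 - m))) := by
    have h : Tendsto (fun j => (1/2 : ℝ) * (1 - ((n j:ℝ) - 2) * ((n j:ℝ) - 4) /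
        ((4*((k j - r j : ℕ):ℝ) + (n j:ℝ)) * (4*((k j - r j : ℕ):ℝ) + (n j:ℝ) - 4)))) atTop
        (nhds ((1/2) * (1 - m))) := (tendsto_const_nhds.sub hx4).const_mul _
    exact h.congr fun j => rfl
  have ha' : Tendsto (fun j => (1/4 : ℝ) *
      (1 - ((n j:ℝ)-2)^2/(4*((k j - r j : ℕ):ℝ)+(n j:ℝ))^2)) atTop
      (nhds ((1/4) * (1 - m))) :=
    (tendsto_const_nhds.sub hx5).const_mul (1/4 : ℝ)
  -- upper and lower sequences
  set hi : ℕ → ℝ := fun j => bcoef (n j) (k j) + 2 * Real.sqrt ((1/16) *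
      (1 - (((n j:ℝ)-2)^2 - 4)/((4*(k j:ℝ)+(n j:ℝ))^2 - 4)) *
      (1 - ((n j:ℝ)-4)^2/(4*(k j:ℝ)+(n j:ℝ))^2)) with hhidef
  set lo : ℕ → ℝ := fun j => (((r j:ℝ) - 1) * (bcoef (n j) (k j - r j) +
      2 * ((1/4 : ℝ) * (1 - ((n j:ℝ)-2)^2/(4*((k j - r j : ℕ):ℝ)+(n j:ℝ))^2)))) /
      ((r j:ℝ) + 1) with hlodef
  have hhi_lim : Tendsto hi atTop (nhds (1 - m)) := by
    have := hbk.add (hUB.const_mul 2)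
    have heq : (1/2 : ℝ) * (1 - m) + 2 * ((1 - m)/4) = 1 - m := by ring
    rw [heq] at this
    exact this
  have hlo_lim : Tendsto lo atTop (nhds (1 - m)) := by
    have hinner : Tendsto (fun j => bcoef (n j) (k j - r j) +
        2 * ((1/4 : ℝ) * (1 - ((n j:ℝ)-2)^2/(4*((k j - r j : ℕ):ℝ)+(n j:ℝ))^2))) atTop
        (nhds ((1/2) * (1 - m) + 2 * ((1/4) * (1 - m)))) := hbk'.add (ha'.const_mul 2)
    have := hx6.mul hinner
    have heq : (1:ℝ) * ((1/2) * (1 - m) + 2 * ((1/4) * (1 - m))) = 1 - m := by ring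
    rw [heq] at this
    apply this.congr
    intro j
    rw [hlodef]
    ring
  -- eventual bounds
  have hle_hi : ∀ᶠ j in atTop, maxEig (n j) (k j) ≤ hi j := by
    filter_upwards [hev] with j ⟨h5, h9, h3⟩
    exact maxEig_le_of_bounds (Real.sqrt_nonneg _) (bcoef_nonneg h5 _) h5
      (fun s hs => bcoef_mono h5 hs) (fun s hs => acoef_le h5 (by omega))
  have hge_lo : ∀ᶠ j in atTop, lo j ≤ maxEig (n j) (k j) := by
    filter_upwards [hev] with j ⟨h5, h9, h3⟩
    have hkey := maxEig_ge (n := n j) (k := k j) h5 (acoef_ge_nonneg h5)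
      (bcoef_nonneg h5 _) (r := r j) (by omega) (Nat.sqrt_le_self (k j))
      (fun s h1 h2 => bcoef_mono h5 h1)
      (fun s h1 h2 => acoef_ge h5 h1)
    have hpos : (0:ℝ) < (r j:ℝ) + 1 := by positivity
    rw [hlodef]
    rw [div_le_iff₀ hpos]
    exact hkey
  -- conclude
  have hfinal : (4 : ℝ) * (ℓ + 1) / (ℓ + 2) ^ 2 = 1 - m := by
    rw [hmdef]
    have : (ℓ + 2) ≠ 0 := by linarith
    have : (2 + ℓ) ≠ 0 := by linarith
    field_simp
    ring
  rw [hfinal]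
  exact tendsto_of_tendsto_of_tendsto_of_le_of_le' hlo_lim hhi_lim hge_lo hle_hi
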